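/- Let $P$ and $Q$ be $p \times p$ Hermitian matrices and $R = P + Q$, with eigenvalues of each matrix arranged in decreasing order. Then $\lambda_i(R) \le \lambda_j(P) + \lambda_{i-j+1}(Q)$ for all $1 \le j \le i \le p$, and $\lambda_i(R) \ge \lambda_j(P) + \lambda_{i-j+p}(Q)$ for all $1 \le i \le j \le p$ (Weyl's inequalities). -/

import Mathlib

open Finset Module Submodule Matrix

/-- `μ` is a decreasing enumeration of the eigenvalues of the Hermitian matrix `M`. -/
def IsSortedEigs {p : ℕ} (M : Matrix (Fin p) (Fin p) ℂ) (hM : M.IsHermitian)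
    (μ : Fin p → ℝ) : Prop :=
  Antitone μ ∧ ∃ σ : Equiv.Perm (Fin p), μ = hM.eigenvalues ∘ σ

section Aux

variable {p : ℕ}

local notation "E" => EuclideanSpace ℂ (Fin p)
local notation "⟪" x ", " y "⟫" => @inner ℂ _ _ x y

private lemma aux_finrank_span (b : OrthonormalBasis (Fin p) ℂ E) (S : Finset (Fin p)) :
    finrank ℂ (span ℂ (b '' (S : Set (Fin p)))) = S.card := by
  classical
  have hinj : Function.Injective b := by simpa using b.toBasis.injective
  have hli : LinearIndependent ℂ ((↑) : (b '' (S : Set (Fin p))) → E) :=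
    (((linearIndepOn_id_range_iff hinj).mpr b.orthonormal.linearIndependent).mono (Set.image_subset_range _ _)).linearIndependent
  have hfin : (b '' (S : Set (Fin p))).Finite := (S.finite_toSet.image _)
  haveI : Fintype (b '' (S : Set (Fin p))) := hfin.fintype
  rw [finrank_span_set_eq_card hli]
  rw [Set.toFinset_image]
  simp [Finset.card_image_of_injective _ hinj]

private lemma aux_exists (V₁ V₂ V₃ : Submodule ℂ E)
    (h : 2 * p + 1 ≤ finrank ℂ V₁ + finrank ℂ V₂ + finrank ℂ V₃) :
    ∃ x : E, x ≠ 0 ∧ x ∈ V₁ ∧ x ∈ V₂ ∧ x ∈ V₃ := by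
  have hdim : finrank ℂ E = p := finrank_euclideanSpace_fin
  have h12 := Submodule.finrank_sup_add_finrank_inf_eq V₁ V₂
  have h12' : finrank ℂ ↥(V₁ ⊔ V₂) ≤ p := by simpa [hdim] using Submodule.finrank_le (V₁ ⊔ V₂)
  have h123 := Submodule.finrank_sup_add_finrank_inf_eq (V₁ ⊓ V₂) V₃
  have h123' : finrank ℂ ↥(V₁ ⊓ V₂ ⊔ V₃) ≤ p := by
    simpa [hdim] using Submodule.finrank_le (V₁ ⊓ V₂ ⊔ V₃)
  have hpos : 0 < finrank ℂ ↥(V₁ ⊓ V₂ ⊓ V₃) := by omega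
  obtain ⟨⟨x, hx⟩, hx0⟩ := Module.finrank_pos_iff_exists_ne_zero.mp hpos
  refine ⟨x, ?_, (hx.1).1, (hx.1).2, hx.2⟩
  simpa [Submodule.mk_eq_zero] using hx0

private lemma aux_repr_zero (b : OrthonormalBasis (Fin p) ℂ E) (S : Finset (Fin p))
    (x : E) (hx : x ∈ span ℂ (b '' (S : Set (Fin p)))) {k : Fin p} (hk : k ∉ S) :
    b.repr x k = 0 := by
  rw [b.repr_apply_apply]
  have hle : span ℂ (b '' (S : Set (Fin p))) ≤ (ℂ ∙ (b k))ᗮ := by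
    rw [Submodule.span_le]
    rintro y ⟨j, hj, rfl⟩
    rw [SetLike.mem_coe, Submodule.mem_orthogonal_singleton_iff_inner_right]
    exact b.orthonormal.2 (fun h => hk (h ▸ hj))
  have := hle hx
  rw [Submodule.mem_orthogonal_singleton_iff_inner_right] at this
  exact this

private lemma aux_rayleigh (T : E →ₗ[ℂ] E) (b : OrthonormalBasis (Fin p) ℂ E) (e : Fin p → ℝ)
    (hT : ∀ i, T (b i) = (e i : ℂ) • b i) (x : E) :
    (⟪x, T x⟫).re = ∑ k, e k * ‖b.repr x k‖ ^ 2 := by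
  have hx : T x = ∑ k, b.repr x k • ((e k : ℂ) • b k) := by
    conv_lhs => rw [← b.sum_repr x]
    rw [map_sum]
    exact Finset.sum_congr rfl fun k _ => by rw [_root_.map_smul, hT]
  rw [hx, inner_sum, Complex.re_sum]
  congr 1
  ext k
  rw [inner_smul_right, inner_smul_right,
    ← inner_conj_symm x (b k), ← b.repr_apply_apply]
  set c := b.repr x k
  have : c * ((e k : ℂ) * (starRingEnd ℂ) c) = ((e k * ‖c‖ ^ 2 : ℝ) : ℂ) := by
    rw [mul_comm c, mul_assoc, mul_comm ((starRingEnd ℂ) c) c, Complex.mul_conj']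
    push_cast
    ring
  rw [this, Complex.ofReal_re]

private lemma aux_norm_sq (b : OrthonormalBasis (Fin p) ℂ E) (x : E) :
    ‖x‖ ^ 2 = ∑ k, ‖b.repr x k‖ ^ 2 := by
  have h := aux_rayleigh (LinearMap.id) b (fun _ => 1) (by simp) x
  simpa [← inner_self_eq_norm_sq (𝕜 := ℂ) x] using h

private lemma aux_rayleigh_le (T : E →ₗ[ℂ] E) (b : OrthonormalBasis (Fin p) ℂ E)
    (e : Fin p → ℝ) (hT : ∀ i, T (b i) = (e i : ℂ) • b i) (S : Finset (Fin p)) (a : ℝ)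
    (ha : ∀ k ∈ S, e k ≤ a) (x : E) (hx : x ∈ span ℂ (b '' (S : Set (Fin p)))) :
    (⟪x, T x⟫).re ≤ a * ‖x‖ ^ 2 := by
  rw [aux_rayleigh T b e hT x, aux_norm_sq b x, Finset.mul_sum]
  apply Finset.sum_le_sum
  intro k _
  by_cases hk : k ∈ S
  · exact mul_le_mul_of_nonneg_right (ha k hk) (by positivity)
  · simp [aux_repr_zero b S x hx hk]

private lemma aux_rayleigh_ge (T : E →ₗ[ℂ] E) (b : OrthonormalBasis (Fin p) ℂ E)
    (e : Fin p → ℝ) (hT : ∀ i, T (b i) = (e i : ℂ) • b i) (S : Finset (Fin p)) (a : ℝ)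
    (ha : ∀ k ∈ S, a ≤ e k) (x : E) (hx : x ∈ span ℂ (b '' (S : Set (Fin p)))) :
    a * ‖x‖ ^ 2 ≤ (⟪x, T x⟫).re := by
  rw [aux_rayleigh T b e hT x, aux_norm_sq b x, Finset.mul_sum]
  apply Finset.sum_le_sum
  intro k _
  by_cases hk : k ∈ S
  · exact mul_le_mul_of_nonneg_right (ha k hk) (by positivity)
  · simp [aux_repr_zero b S x hx hk]

private lemma aux_basis (M : Matrix (Fin p) (Fin p) ℂ) (hM : M.IsHermitian) (μ : Fin p → ℝ)
    (hμ : IsSortedEigs M hM μ) :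
    ∃ b : OrthonormalBasis (Fin p) ℂ E,
      ∀ i, (Matrix.toEuclideanLin M) (b i) = (μ i : ℂ) • b i := by
  obtain ⟨-, σ, rfl⟩ := hμ
  refine ⟨hM.eigenvectorBasis.reindex σ.symm, fun i => ?_⟩
  have h := hM.mulVec_eigenvectorBasis (σ i)
  apply (WithLp.equiv 2 (Fin p → ℂ)).injective
  rw [WithLp.equiv_apply, Matrix.ofLp_toEuclideanLin_apply]
  simp only [OrthonormalBasis.coe_reindex, Equiv.symm_symm, Function.comp_apply]
  show M *ᵥ ⇑(hM.eigenvectorBasis (σ i)) = _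
  rw [h]
  show _ = ((hM.eigenvalues (σ i) : ℂ) • (hM.eigenvectorBasis (σ i) : E) : Fin p → ℂ)
  funext j
  simp [Complex.real_smul]

end Aux

/-- Weyl's inequalities: for Hermitian `P`, `Q` and `R = P + Q` with eigenvalues in
decreasing order (`0`-indexed here), `λ_i(R) ≤ λ_j(P) + λ_{i-j}(Q)` for `j ≤ i < p`,
and `λ_i(R) ≥ λ_j(P) + λ_{p-1-(j-i)}(Q)` for `i ≤ j < p`. -/
theorem weyl_inequalities {p : ℕ} (P Q : Matrix (Fin p) (Fin p) ℂ)
    (hP : P.IsHermitian) (hQ : Q.IsHermitian)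
    (μP μQ μR : Fin p → ℝ) (hμP : IsSortedEigs P hP μP) (hμQ : IsSortedEigs Q hQ μQ)
    (hμR : IsSortedEigs (P + Q) (hP.add hQ) μR) :
    (∀ (i j : ℕ) (hi : i < p) (hji : j ≤ i),
      μR ⟨i, hi⟩ ≤ μP ⟨j, by omega⟩ + μQ ⟨i - j, by omega⟩) ∧
    (∀ (i j : ℕ) (hj : j < p) (hij : i ≤ j),
      μP ⟨j, hj⟩ + μQ ⟨p - 1 - (j - i), by omega⟩ ≤ μR ⟨i, by omega⟩) := by
  classical
  obtain ⟨bP, hbP⟩ := aux_basis P hP μP hμP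
  obtain ⟨bQ, hbQ⟩ := aux_basis Q hQ μQ hμQ
  obtain ⟨bR, hbR⟩ := aux_basis (P + Q) (hP.add hQ) μR hμR
  have hTsum : ∀ x : EuclideanSpace ℂ (Fin p),
      (inner ℂ x (Matrix.toEuclideanLin (P + Q) x) : ℂ).re =
        (inner ℂ x (Matrix.toEuclideanLin P x) : ℂ).re +
        (inner ℂ x (Matrix.toEuclideanLin Q x) : ℂ).re := by
    intro x
    rw [map_add]
    simp [inner_add_right]
  constructor
  · intro i j hi hji
    have hji' : j < p := lt_of_le_of_lt hji hi
    have hij' : i - j < p := by omega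
    obtain ⟨x, hx0, hxR, hxP, hxQ⟩ := aux_exists
      (span ℂ (bR '' (Finset.Iic ⟨i, hi⟩ : Finset (Fin p))))
      (span ℂ (bP '' (Finset.Ici ⟨j, hji'⟩ : Finset (Fin p))))
      (span ℂ (bQ '' (Finset.Ici ⟨i - j, hij'⟩ : Finset (Fin p))))
      (by rw [aux_finrank_span, aux_finrank_span, aux_finrank_span,
            Fin.card_Iic, Fin.card_Ici, Fin.card_Ici]; simp; omega)
    have hnorm : (0 : ℝ) < ‖x‖ ^ 2 := pow_pos (norm_pos_iff.mpr hx0) 2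
    have h1 : μR ⟨i, hi⟩ * ‖x‖ ^ 2 ≤
        (inner ℂ x (Matrix.toEuclideanLin (P + Q) x) : ℂ).re :=
      aux_rayleigh_ge _ bR μR hbR _ _
        (fun k hk => hμR.1 (Finset.mem_Iic.mp hk)) x hxR
    have h2 : (inner ℂ x (Matrix.toEuclideanLin P x) : ℂ).re ≤ μP ⟨j, hji'⟩ * ‖x‖ ^ 2 :=
      aux_rayleigh_le _ bP μP hbP _ _
        (fun k hk => hμP.1 (Finset.mem_Ici.mp hk)) x hxP
    have h3 : (inner ℂ x (Matrix.toEuclideanLin Q x) : ℂ).re ≤ μQ ⟨i - j, hij'⟩ * ‖x‖ ^ 2 :=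
      aux_rayleigh_le _ bQ μQ hbQ _ _
        (fun k hk => hμQ.1 (Finset.mem_Ici.mp hk)) x hxQ
    have hkey : μR ⟨i, hi⟩ * ‖x‖ ^ 2 ≤ (μP ⟨j, hji'⟩ + μQ ⟨i - j, hij'⟩) * ‖x‖ ^ 2 := by
      rw [add_mul]
      have := hTsum x
      linarith
    exact le_of_mul_le_mul_right hkey hnorm
  · intro i j hj hij
    have hi' : i < p := lt_of_le_of_lt hij hj
    have hk' : p - 1 - (j - i) < p := by omega
    obtain ⟨x, hx0, hxR, hxP, hxQ⟩ := aux_exists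
      (span ℂ (bR '' (Finset.Ici ⟨i, hi'⟩ : Finset (Fin p))))
      (span ℂ (bP '' (Finset.Iic ⟨j, hj⟩ : Finset (Fin p))))
      (span ℂ (bQ '' (Finset.Iic ⟨p - 1 - (j - i), hk'⟩ : Finset (Fin p))))
      (by rw [aux_finrank_span, aux_finrank_span, aux_finrank_span,
            Fin.card_Ici, Fin.card_Iic, Fin.card_Iic]; simp; omega)
    have hnorm : (0 : ℝ) < ‖x‖ ^ 2 := pow_pos (norm_pos_iff.mpr hx0) 2
    have h1 : (inner ℂ x (Matrix.toEuclideanLin (P + Q) x) : ℂ).re ≤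
        μR ⟨i, hi'⟩ * ‖x‖ ^ 2 :=
      aux_rayleigh_le _ bR μR hbR _ _
        (fun k hk => hμR.1 (Finset.mem_Ici.mp hk)) x hxR
    have h2 : μP ⟨j, hj⟩ * ‖x‖ ^ 2 ≤ (inner ℂ x (Matrix.toEuclideanLin P x) : ℂ).re :=
      aux_rayleigh_ge _ bP μP hbP _ _
        (fun k hk => hμP.1 (Finset.mem_Iic.mp hk)) x hxP
    have h3 : μQ ⟨p - 1 - (j - i), hk'⟩ * ‖x‖ ^ 2 ≤
        (inner ℂ x (Matrix.toEuclideanLin Q x) : ℂ).re :=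
      aux_rayleigh_ge _ bQ μQ hbQ _ _
        (fun k hk => hμQ.1 (Finset.mem_Iic.mp hk)) x hxQ
    have hkey : (μP ⟨j, hj⟩ + μQ ⟨p - 1 - (j - i), hk'⟩) * ‖x‖ ^ 2 ≤
        μR ⟨i, hi'⟩ * ‖x‖ ^ 2 := by
      rw [add_mul]
      have := hTsum x
      linarith
    exact le_of_mul_le_mul_right hkey hnorm
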